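/- The cubic polynomial θ(τ) = (1−τ)³ + τ/γ − 1, for γ ∈ [1/3, 1/2], has roots 0 and τ_{0,1}(γ) = 3/2 ∓ √(1/γ − 3/4); its smaller positive root τ₀(γ) satisfies 0 ≤ τ₀(γ) ≤ γ and τ₀(γ) ≤ (2/5)·(3γ−1)/γ; moreover the integral I₀ = ∫₀^{τ₀} θ(τ) dτ satisfies 4 I₀ = τ₀⁴ − 2τ₀³ ≥ −(16/125)((3γ−1)/γ)³. -/

import Mathlib

set_option maxHeartbeats 1000000 in
/-- Properties of the cubic `θ(τ) = (1−τ)³ + τ/γ − 1` for `γ ∈ [1/3, 1/2]`: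
its roots are `0` and `τ_{0,1}(γ) = 3/2 ∓ √(1/γ − 3/4)`; the smaller positive root
`τ₀` satisfies `0 ≤ τ₀ ≤ γ` and `τ₀ ≤ (2/5)·(3γ−1)/γ`; moreover
`4∫₀^{τ₀} θ = τ₀⁴ − 2τ₀³ ≥ −(16/125)((3γ−1)/γ)³`. -/
theorem theta_cubic_properties (γ : ℝ) (hγ : γ ∈ Set.Icc (1/3 : ℝ) (1/2 : ℝ))
    (θ : ℝ → ℝ) (hθ : ∀ τ, θ τ = (1 - τ) ^ 3 + τ / γ - 1)
    (τ0 τ1 : ℝ)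
    (hτ0 : τ0 = 3/2 - Real.sqrt (1/γ - 3/4))
    (hτ1 : τ1 = 3/2 + Real.sqrt (1/γ - 3/4)) :
    θ 0 = 0 ∧ θ τ0 = 0 ∧ θ τ1 = 0 ∧
    0 ≤ τ0 ∧ τ0 ≤ γ ∧
    τ0 ≤ (2/5) * ((3 * γ - 1) / γ) ∧
    4 * ∫ τ in (0 : ℝ)..τ0, θ τ = τ0 ^ 4 - 2 * τ0 ^ 3 ∧
    τ0 ^ 4 - 2 * τ0 ^ 3 ≥ -(16/125) * ((3 * γ - 1) / γ) ^ 3 := by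
  obtain ⟨h1, h2⟩ := hγ
  have hγ0 : (0:ℝ) < γ := by linarith
  have hinv : γ * (1/γ) = 1 := by field_simp
  have hinvle : 1/γ ≤ 3 := by rw [div_le_iff₀ hγ0]; linarith
  have hinvge : 2 ≤ 1/γ := by rw [le_div_iff₀ hγ0]; linarith
  set s := Real.sqrt (1/γ - 3/4) with hs
  have hnn : (0:ℝ) ≤ 1/γ - 3/4 := by linarith
  have hs2 : s^2 = 1/γ - 3/4 := Real.sq_sqrt hnn
  have hs0 : 0 ≤ s := Real.sqrt_nonneg _
  have hsle : s ≤ 3/2 := by nlinarith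
  have ht00 : 0 ≤ τ0 := by rw [hτ0]; linarith
  have hq : τ0^2 - 3*τ0 + 3 - 1/γ = 0 := by
    rw [hτ0]; nlinarith [hs2]
  have hq1 : τ1^2 - 3*τ1 + 3 - 1/γ = 0 := by
    rw [hτ1]; nlinarith [hs2]
  have hξ : (3 * γ - 1) / γ = 3 - 1/γ := by field_simp
  have hτγ : τ0 ≤ γ := by
    rw [hτ0]
    have h32 : 3/2 - γ ≤ s := by nlinarith [sq_nonneg (γ - 1)]
    linarith
  have hτξ : τ0 ≤ (2/5) * ((3 * γ - 1) / γ) := by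
    rw [hξ, hτ0]
    have h32 : 3/2 - (2/5) * (3 - 1/γ) ≤ s := by
      rw [hs, Real.le_sqrt (by linarith) (by linarith)]
      nlinarith [mul_nonneg (by linarith : (0:ℝ) ≤ 3 - 1/γ) (by linarith : (0:ℝ) ≤ 1/γ - 7/4)]
    linarith
  refine ⟨?_, ?_, ?_, ht00, hτγ, hτξ, ?_, ?_⟩
  · rw [hθ]; ring
  · rw [hθ, div_eq_mul_one_div]
    have : 1/γ = τ0^2 - 3*τ0 + 3 := by linarith
    rw [this]; ring
  · rw [hθ, div_eq_mul_one_div]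
    have : 1/γ = τ1^2 - 3*τ1 + 3 := by linarith
    rw [this]; ring
  · have hderiv : ∀ τ : ℝ, HasDerivAt
        (fun t : ℝ => -(t^4/4) + t^3 - (3/2)*t^2 + t^2/(2*γ)) (θ τ) τ := by
      intro τ
      have h1 := ((hasDerivAt_pow 4 τ).div_const 4).neg
      have h2 := hasDerivAt_pow 3 τ
      have h3 := (hasDerivAt_pow 2 τ).const_mul (3/2 : ℝ)
      have h4 := (hasDerivAt_pow 2 τ).div_const (2*γ)
      have h := ((h1.add h2).sub h3).add h4
      refine h.congr_deriv ?_
      rw [hθ]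
      push_cast
      field_simp
      ring
    have hcont : Continuous θ := by
      have : θ = fun τ => (1 - τ) ^ 3 + τ / γ - 1 := funext hθ
      rw [this]; fun_prop
    have hint : (∫ τ in (0:ℝ)..τ0, θ τ) =
        (-(τ0^4/4) + τ0^3 - (3/2)*τ0^2 + τ0^2/(2*γ)) -
        (-((0:ℝ)^4/4) + (0:ℝ)^3 - (3/2)*(0:ℝ)^2 + (0:ℝ)^2/(2*γ)) := by
      exact intervalIntegral.integral_eq_sub_of_hasDerivAt
        (fun t _ => hderiv t) (hcont.intervalIntegrable _ _)
    rw [hint]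
    have hinv' : 1/γ = τ0^2 - 3*τ0 + 3 := by linarith
    have hrw : τ0^2/(2*γ) = τ0^2/2 * (1/γ) := by ring
    rw [hrw, hinv']
    ring
  · have hξ1 : (3 * γ - 1) / γ ≤ 1 := by rw [hξ]; linarith
    have hξ0 : 0 ≤ (3 * γ - 1) / γ := by rw [hξ]; linarith
    nlinarith [hτξ, ht00, hτγ, pow_le_pow_left₀ ht00 hτξ 3, hξ0]
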